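/- Let a, b ∈ ℝ with a < b, and let f : ℝ → ℝ be integrable with f ≥ 0 almost everywhere and f = 0 almost everywhere on [a,b]. Define F(x) = -(1/2) ∫_ℝ sgn(x-y) e^{-|x-y|} f(y) dy, where sgn denotes the sign function (sgn 0 = 0). Then F(a) = F(b) if and only if f = 0 almost everywhere on ℝ. -/

import Mathlib

open MeasureTheory Real

lemma real_sign_measurable : Measurable Real.sign := by
  have : Real.sign = fun r : ℝ => if r < 0 then (-1:ℝ) else if 0 < r then 1 else 0 := by
    funext r; rfl
  rw [this]
  exact Measurable.ite (measurableSet_lt measurable_id measurable_const) measurable_const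
    (Measurable.ite (measurableSet_lt measurable_const measurable_id)
      measurable_const measurable_const)

lemma abs_real_sign (r : ℝ) : |Real.sign r| ≤ 1 := by
  rcases Real.sign_apply_eq r with h | h | h <;> rw [h] <;> norm_num

lemma ker_int (x : ℝ) (f : ℝ → ℝ) (hf : Integrable f) :
    Integrable (fun y => Real.sign (x - y) * Real.exp (-|x - y|) * f y) := by
  apply hf.bdd_mul (c := 1)
  · exact ((real_sign_measurable.comp (measurable_const.sub measurable_id)).mul
      (((measurable_const.sub measurable_id).abs.neg).exp)).aestronglyMeasurable
  · refine Filter.Eventually.of_forall (fun y => ?_)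
    rw [norm_mul]
    have h1 : ‖Real.sign (x - y)‖ ≤ 1 := by simpa using abs_real_sign (x - y)
    have h2 : ‖Real.exp (-|x - y|)‖ ≤ 1 := by
      rw [Real.norm_eq_abs, abs_of_pos (Real.exp_pos _)]
      exact Real.exp_le_one_iff.mpr (neg_nonpos.mpr (abs_nonneg _))
    calc ‖Real.sign (x - y)‖ * ‖Real.exp (-|x - y|)‖ ≤ 1 * 1 :=
          mul_le_mul h1 h2 (norm_nonneg _) zero_le_one
      _ = 1 := one_mul 1

lemma g_pos (a b : ℝ) (hab : a < b) (y : ℝ) (hy : y ∉ Set.Icc a b) :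
    0 < Real.sign (a - y) * Real.exp (-|a - y|)
        - Real.sign (b - y) * Real.exp (-|b - y|) := by
  rw [Set.mem_Icc, not_and_or, not_le, not_le] at hy
  rcases hy with hy | hy
  · rw [Real.sign_of_pos (by linarith : (0:ℝ) < a - y),
      Real.sign_of_pos (by linarith : (0:ℝ) < b - y),
      abs_of_pos (by linarith : (0:ℝ) < a - y),
      abs_of_pos (by linarith : (0:ℝ) < b - y), one_mul, one_mul, sub_pos]
    exact Real.exp_lt_exp.mpr (by linarith)
  · rw [Real.sign_of_neg (by linarith : a - y < 0),
      Real.sign_of_neg (by linarith : b - y < 0),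
      abs_of_neg (by linarith : a - y < 0),
      abs_of_neg (by linarith : b - y < 0), neg_one_mul, neg_one_mul, sub_neg_eq_add,
      neg_neg, neg_neg]
    have : Real.exp (a - y) < Real.exp (b - y) := Real.exp_lt_exp.mpr (by linarith)
    linarith

theorem F_endpoint_eq_iff
    (a b : ℝ) (hab : a < b)
    (f : ℝ → ℝ) (hf : Integrable f)
    (hf_nonneg : ∀ᵐ y : ℝ, 0 ≤ f y)
    (hf_zero : ∀ᵐ y : ℝ, y ∈ Set.Icc a b → f y = 0)
    (F : ℝ → ℝ)
    (hF : ∀ x, F x = -(1/2) * ∫ y : ℝ, Real.sign (x - y) * Real.exp (-|x - y|) * f y) :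
    F a = F b ↔ f =ᵐ[volume] 0 := by
  set g : ℝ → ℝ := fun y => Real.sign (a - y) * Real.exp (-|a - y|)
      - Real.sign (b - y) * Real.exp (-|b - y|) with hg
  have hint : Integrable (fun y => g y * f y) := by
    have := (ker_int a f hf).sub (ker_int b f hf)
    refine this.congr (Filter.Eventually.of_forall fun y => ?_)
    simp [hg, sub_mul]
  have hI : (∫ y, g y * f y) =
      (∫ y, Real.sign (a - y) * Real.exp (-|a - y|) * f y)
      - ∫ y, Real.sign (b - y) * Real.exp (-|b - y|) * f y := by
    rw [← integral_sub (ker_int a f hf) (ker_int b f hf)]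
    congr 1; funext y; simp [hg, sub_mul]
  have hiff : F a = F b ↔ (∫ y, g y * f y) = 0 := by
    rw [hF a, hF b, hI, sub_eq_zero]
    constructor
    · intro h
      exact mul_left_cancel₀ (by norm_num : (-(1/2):ℝ) ≠ 0) h
    · intro h; rw [h]
  rw [hiff]
  constructor
  · intro h
    have hnn : 0 ≤ᵐ[volume] fun y => g y * f y := by
      filter_upwards [hf_nonneg, hf_zero] with y h1 h2
      by_cases hy : y ∈ Set.Icc a b
      · simp [h2 hy]
      · exact mul_nonneg (g_pos a b hab y hy).le h1
    have hz : (fun y => g y * f y) =ᵐ[volume] 0 :=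
      (integral_eq_zero_iff_of_nonneg_ae hnn hint).mp h
    filter_upwards [hz, hf_zero] with y h1 h2
    by_cases hy : y ∈ Set.Icc a b
    · exact h2 hy
    · have := g_pos a b hab y hy
      have h1' : g y * f y = 0 := h1
      simpa using (mul_eq_zero.mp h1').resolve_left (ne_of_gt this)
  · intro h
    apply integral_eq_zero_of_ae
    filter_upwards [h] with y hy
    simp [hy]
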